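/- Representation theorem for loop-cumulative relations: a binary relation on 𝓛-formulas is a loop-cumulative consequence relation if and only if it equals |~_𝓜 for some conceptual cumulative ordered model 𝓜. -/

import Mathlib

namespace DR

/-- Formulas of the lattice-based language 𝓛: variables, ⊥, ⊤, ∧, ∨. -/
inductive Fm : Type where
  | var : ℕ → Fm
  | bot : Fm
  | top : Fm
  | and : Fm → Fm → Fm
  | or  : Fm → Fm → Fm

/-- A polarity (formal context) (A, X, I). -/
structure Polarity : Type 1 where
  Obj : Type
  Feat : Type
  I : Obj → Feat → Prop

namespace Polarity

variable (P : Polarity)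

def up (B : Set P.Obj) : Set P.Feat := {x | ∀ b ∈ B, P.I b x}
def dn (Y : Set P.Feat) : Set P.Obj := {a | ∀ y ∈ Y, P.I a y}

lemma subset_dn_up (B : Set P.Obj) : B ⊆ P.dn (P.up B) :=
  fun _ ha _ hx => hx _ ha

lemma subset_up_dn (Y : Set P.Feat) : Y ⊆ P.up (P.dn Y) :=
  fun _ hx _ ha => ha _ hx

lemma up_anti {B C : Set P.Obj} (h : B ⊆ C) : P.up C ⊆ P.up B :=
  fun _ hx b hb => hx b (h hb)

lemma dn_anti {Y Z : Set P.Feat} (h : Y ⊆ Z) : P.dn Z ⊆ P.dn Y :=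
  fun _ ha y hy => ha y (h hy)

end Polarity

/-- A formal concept of a polarity: a Galois-stable pair (extension, intension). -/
structure Concept (P : Polarity) : Type where
  ext : Set P.Obj
  int : Set P.Feat
  up_ext : P.up ext = int
  dn_int : P.dn int = ext

namespace Concept

variable {P : Polarity}

/-- Lattice meet of concepts: extensions intersect. -/
def meet (c d : Concept P) : Concept P where
  ext := c.ext ∩ d.ext
  int := P.up (c.ext ∩ d.ext)
  up_ext := rfl
  dn_int := by
    apply Set.Subset.antisymm
    · intro a ha
      constructor
      · rw [← c.dn_int]
        intro y hy
        apply ha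
        rw [← c.up_ext] at hy
        exact P.up_anti Set.inter_subset_left hy
      · rw [← d.dn_int]
        intro y hy
        apply ha
        rw [← d.up_ext] at hy
        exact P.up_anti Set.inter_subset_right hy
    · exact P.subset_dn_up _

/-- Lattice join of concepts: intensions intersect. -/
def join (c d : Concept P) : Concept P where
  ext := P.dn (c.int ∩ d.int)
  int := c.int ∩ d.int
  up_ext := by
    apply Set.Subset.antisymm
    · intro x hx
      constructor
      · rw [← c.up_ext]
        intro b hb
        apply hx
        rw [← c.dn_int] at hb
        exact P.dn_anti Set.inter_subset_left hb
      · rw [← d.up_ext]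
        intro b hb
        apply hx
        rw [← d.dn_int] at hb
        exact P.dn_anti Set.inter_subset_right hb
    · exact P.subset_up_dn _
  dn_int := rfl

/-- The greatest concept. -/
def top (P : Polarity) : Concept P where
  ext := Set.univ
  int := P.up Set.univ
  up_ext := rfl
  dn_int := Set.eq_univ_of_univ_subset (P.subset_dn_up _)

/-- The least concept. -/
def bot (P : Polarity) : Concept P where
  ext := P.dn Set.univ
  int := Set.univ
  up_ext := Set.eq_univ_of_univ_subset (P.subset_up_dn _)
  dn_int := rfl

end Concept

/-- A polarity-based model: a polarity with a valuation of variables into concepts. -/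
structure Model : Type 1 where
  P : Polarity
  V : ℕ → Concept P

namespace Model

/-- Homomorphic extension of the valuation to all formulas. -/
def interp (M : Model) : Fm → Concept M.P
  | .var n => M.V n
  | .bot => Concept.bot M.P
  | .top => Concept.top M.P
  | .and φ ψ => Concept.meet (M.interp φ) (M.interp ψ)
  | .or φ ψ => Concept.join (M.interp φ) (M.interp ψ)

/-- M, a ⊩ φ : the object a is in the extension of φ. -/
def objSat (M : Model) (a : M.P.Obj) (φ : Fm) : Prop := a ∈ (M.interp φ).ext

/-- M, x ≻ φ : the feature x is in the intension of φ. -/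
def featSat (M : Model) (x : M.P.Feat) (φ : Fm) : Prop := x ∈ (M.interp φ).int

end Model

/-- Validity of the sequent φ ⊢ ψ: in every polarity-based model the
extension of φ is contained in the extension of ψ. -/
def SeqValid (φ ψ : Fm) : Prop :=
  ∀ M : Model, (M.interp φ).ext ⊆ (M.interp ψ).ext

/-- A conceptual cumulative consequence relation: reflexive and closed
under (LLE), (RW), (CM) and (Cut). -/
structure IsCumulative (R : Fm → Fm → Prop) : Prop where
  refl : ∀ φ, R φ φ
  lle : ∀ φ ψ χ, SeqValid φ ψ → SeqValid ψ φ → R φ χ → R ψ χ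
  rw : ∀ φ ψ χ, SeqValid φ ψ → R χ φ → R χ ψ
  cm : ∀ φ ψ χ, R φ ψ → R φ χ → R (Fm.and φ ψ) χ
  cut : ∀ φ ψ χ, R (Fm.and φ ψ) χ → R φ ψ → R φ χ

/-- Closure under the rule (Loop). -/
def LoopClosed (R : Fm → Fm → Prop) : Prop :=
  ∀ (n : ℕ) (φ : ℕ → Fm),
    (∀ i < n, R (φ i) (φ (i + 1))) → R (φ n) (φ 0) → R (φ 0) (φ n)

/-- A pointed polarity-based model. -/
structure PointedModel : Type 1 where
  M : Model
  pt : M.P.Obj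

/-- Satisfaction at a pointed model. -/
def PointedModel.sat (Ma : PointedModel) (φ : Fm) : Prop := Ma.M.objSat Ma.pt φ

/-- A pointed model is normal for φ iff it satisfies every plausible consequence of φ. -/
def NormalFor (R : Fm → Fm → Prop) (Ma : PointedModel) (φ : Fm) : Prop :=
  ∀ ψ, R φ ψ → Ma.sat ψ

/-- A pointed model is supernormal for φ. -/
def SupernormalFor (R : Fm → Fm → Prop) (Ma : PointedModel) (φ : Fm) : Prop :=
  ∀ ψ, R φ ψ ↔ Ma.sat ψ

/-- A frame (S, l, ≺): states labelled by sets of pointed polarity-based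
models with a preference relation. -/
structure Frame : Type 2 where
  S : Type
  l : S → Set PointedModel
  prec : S → S → Prop

/-- t is minimal in P (w.r.t. prec). -/
def MinimalIn {α : Type _} (prec : α → α → Prop) (P : Set α) (t : α) : Prop :=
  t ∈ P ∧ ∀ s ∈ P, ¬ prec s t

/-- t is a minimum of P (w.r.t. prec). -/
def IsMinimum {α : Type _} (prec : α → α → Prop) (P : Set α) (t : α) : Prop :=
  t ∈ P ∧ ∀ s ∈ P, s ≠ t → prec t s

/-- P is smooth (w.r.t. prec). -/
def Smooth {α : Type _} (prec : α → α → Prop) (P : Set α) : Prop :=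
  ∀ t ∈ P, MinimalIn prec P t ∨ ∃ s, MinimalIn prec P s ∧ prec s t

namespace Frame

/-- s ⊨ φ : every pointed model in l(s) satisfies φ. -/
def stateSat (F : Frame) (s : F.S) (φ : Fm) : Prop :=
  ∀ Ma ∈ F.l s, Ma.sat φ

/-- φ̂ : the set of states satisfying φ. -/
def hat (F : Frame) (φ : Fm) : Set F.S := {s | F.stateSat s φ}

/-- A conceptual cumulative model: φ̂ is smooth for every φ. -/
def IsCumulativeModel (F : Frame) : Prop :=
  ∀ φ : Fm, Smooth F.prec (F.hat φ)

/-- The consequence relation |~_𝓜 defined by a frame: every state minimal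
in φ̂ belongs to ψ̂. -/
def conseq (F : Frame) (φ ψ : Fm) : Prop :=
  ∀ s, MinimalIn F.prec (F.hat φ) s → s ∈ F.hat ψ

/-- Replace the preference relation of a frame. -/
def withPrec (F : Frame) (p : F.S → F.S → Prop) : Frame := ⟨F.S, F.l, p⟩

end Frame

/-- The equivalence class φ/∼ of φ under ∼ (φ ∼ ψ iff φ |~ ψ and ψ |~ φ). -/
def cls (R : Fm → Fm → Prop) (φ : Fm) : Set Fm := {ψ | R φ ψ ∧ R ψ φ}

/-- φ/∼ ≤ ψ/∼ : there is χ ∈ φ/∼ with ψ |~ χ (ψ any representative of ψ/∼). -/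
def clsLE (R : Fm → Fm → Prop) (C D : Set Fm) : Prop :=
  ∃ χ ∈ C, ∃ ψ ∈ D, R ψ χ

/-- The canonical model of a consequence relation: states are the
equivalence classes φ/∼, labelled by the normal pointed models for φ,
with φ/∼ ≺ ψ/∼ iff φ/∼ ≤ ψ/∼ and φ/∼ ≠ ψ/∼. -/
def canonicalFrame (R : Fm → Fm → Prop) : Frame where
  S := {C : Set Fm // ∃ φ, C = cls R φ}
  l := fun s => {Ma | ∃ φ, s.val = cls R φ ∧ NormalFor R Ma φ}
  prec := fun s t => clsLE R s.val t.val ∧ s ≠ t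

/-- The state φ/∼ of the canonical model. -/
def canonicalState (R : Fm → Fm → Prop) (φ : Fm) : (canonicalFrame R).S :=
  ⟨cls R φ, φ, rfl⟩


/- ===== Auxiliary development ===== -/

section Valid

lemma Concept.int_anti {P : Polarity} {c d : Concept P} (h : c.ext ⊆ d.ext) :
    d.int ⊆ c.int := by
  rw [← c.up_ext, ← d.up_ext]; exact P.up_anti h

lemma sv_refl (φ : Fm) : SeqValid φ φ := fun _ => subset_rfl

lemma sv_trans {φ ψ χ : Fm} (h1 : SeqValid φ ψ) (h2 : SeqValid ψ χ) : SeqValid φ χ :=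
  fun M => (h1 M).trans (h2 M)

lemma sv_top (φ : Fm) : SeqValid φ Fm.top := fun M _ _ => Set.mem_univ _

lemma sv_bot (φ : Fm) : SeqValid Fm.bot φ := fun M a ha => by
  rw [← (M.interp φ).dn_int]
  exact fun y _ => ha y trivial

lemma sv_and_left (φ ψ : Fm) : SeqValid (Fm.and φ ψ) φ :=
  fun M => Set.inter_subset_left

lemma sv_and_right (φ ψ : Fm) : SeqValid (Fm.and φ ψ) ψ :=
  fun M => Set.inter_subset_right

lemma sv_and_intro {φ ψ χ : Fm} (h1 : SeqValid φ ψ) (h2 : SeqValid φ χ) :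
    SeqValid φ (Fm.and ψ χ) :=
  fun M => Set.subset_inter (h1 M) (h2 M)

lemma sv_and_comm (φ ψ : Fm) : SeqValid (Fm.and φ ψ) (Fm.and ψ φ) :=
  sv_and_intro (sv_and_right φ ψ) (sv_and_left φ ψ)

lemma sv_or_inl (φ ψ : Fm) : SeqValid φ (Fm.or φ ψ) := fun M a ha => by
  rw [← (M.interp φ).dn_int] at ha
  exact fun y hy => ha y hy.1

lemma sv_or_inr (φ ψ : Fm) : SeqValid ψ (Fm.or φ ψ) := fun M a ha => by
  rw [← (M.interp ψ).dn_int] at ha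
  exact fun y hy => ha y hy.2

lemma sv_or_elim {φ ψ χ : Fm} (h1 : SeqValid φ χ) (h2 : SeqValid ψ χ) :
    SeqValid (Fm.or φ ψ) χ := fun M a ha => by
  rw [← (M.interp χ).dn_int]
  exact fun y hy => ha y ⟨Concept.int_anti (h1 M) hy, Concept.int_anti (h2 M) hy⟩

end Valid

section Cum

variable {R : Fm → Fm → Prop}

lemma rw_valid (h : IsCumulative R) {φ ψ : Fm} (hv : SeqValid φ ψ) : R φ ψ :=
  h.rw φ ψ φ hv (h.refl φ)

lemma r_and_intro (h : IsCumulative R) {φ ψ χ : Fm} (hψ : R φ ψ) (hχ : R φ χ) :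
    R φ (Fm.and ψ χ) := by
  have c1 : R (Fm.and φ ψ) χ := h.cm _ _ _ hψ hχ
  have c2 : R (Fm.and (Fm.and φ ψ) χ) (Fm.and ψ χ) :=
    rw_valid h (sv_and_intro (sv_trans (sv_and_left _ _) (sv_and_right _ _)) (sv_and_right _ _))
  have c3 : R (Fm.and φ ψ) (Fm.and ψ χ) := h.cut _ _ _ c2 c1
  exact h.cut _ _ _ c3 hψ

/-- Mutual plausible consequence. -/
def Eqv (R : Fm → Fm → Prop) (φ ψ : Fm) : Prop := R φ ψ ∧ R ψ φ

lemma left_eq (h : IsCumulative R) {φ ψ χ : Fm} (he : Eqv R φ ψ) : R φ χ ↔ R ψ χ := by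
  have h1 : R φ χ ↔ R (Fm.and φ ψ) χ :=
    ⟨fun hx => h.cm _ _ _ he.1 hx, fun hx => h.cut _ _ _ hx he.1⟩
  have h2 : R ψ χ ↔ R (Fm.and ψ φ) χ :=
    ⟨fun hx => h.cm _ _ _ he.2 hx, fun hx => h.cut _ _ _ hx he.2⟩
  have h3 : R (Fm.and φ ψ) χ ↔ R (Fm.and ψ φ) χ :=
    ⟨h.lle _ _ _ (sv_and_comm _ _) (sv_and_comm _ _),
     h.lle _ _ _ (sv_and_comm _ _) (sv_and_comm _ _)⟩
  rw [h1, h3, ← h2]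

lemma cls_eq_iff (h : IsCumulative R) {φ ψ : Fm} :
    cls R φ = cls R ψ ↔ Eqv R φ ψ := by
  constructor
  · intro he
    have : ψ ∈ cls R φ := he ▸ (⟨h.refl ψ, h.refl ψ⟩ : ψ ∈ cls R ψ)
    exact this
  · intro he
    ext χ
    simp only [cls, Set.mem_setOf_eq]
    constructor
    · rintro ⟨h1, h2⟩
      exact ⟨(left_eq h he).mp h1, (left_eq h (⟨h2, h1⟩ : Eqv R χ φ)).mpr he.1⟩
    · rintro ⟨h1, h2⟩
      exact ⟨(left_eq h he).mpr h1, (left_eq h (⟨h2, h1⟩ : Eqv R χ ψ)).mpr he.2⟩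

end Cum

section Supernormal

variable (R : Fm → Fm → Prop) (φ : Fm)

/-- Polarity for the supernormal pointed model for φ. -/
def snPol : Polarity where
  Obj := Option Fm
  Feat := Fm
  I := fun o β => o.elim (R φ β) (fun α => SeqValid α β)

/-- Intended extension of ψ in the supernormal model. -/
def snE (ψ : Fm) : Set (snPol R φ).Obj := {o | (snPol R φ).I o ψ}

/-- Intended intension of ψ. -/
def snU (ψ : Fm) : Set Fm := {β | SeqValid ψ β}

variable {R}

lemma up_snE (h : IsCumulative R) (ψ : Fm) :
    (snPol R φ).up (snE R φ ψ) = snU ψ := by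
  apply Set.Subset.antisymm
  · intro β hβ
    exact hβ (some ψ) (sv_refl ψ)
  · intro β hβ o ho
    cases o with
    | none => exact h.rw _ _ _ hβ ho
    | some α => exact sv_trans ho hβ

lemma dn_snU (h : IsCumulative R) (ψ : Fm) :
    (snPol R φ).dn (snU ψ) = snE R φ ψ := by
  apply Set.Subset.antisymm
  · intro o ho
    exact ho ψ (sv_refl ψ)
  · intro o ho β hβ
    cases o with
    | none => exact h.rw _ _ _ hβ ho
    | some α => exact sv_trans ho hβ

/-- The supernormal model for φ. -/
def snModel (h : IsCumulative R) : Model where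
  P := snPol R φ
  V := fun p => ⟨snE R φ (Fm.var p), (snPol R φ).up (snE R φ (Fm.var p)), rfl, by
    rw [up_snE φ h, dn_snU φ h]⟩

lemma snU_or (ψ χ : Fm) : snU ψ ∩ snU χ = snU (Fm.or ψ χ) := by
  ext β
  constructor
  · rintro ⟨h1, h2⟩
    exact sv_or_elim h1 h2
  · intro hb
    exact ⟨sv_trans (sv_or_inl _ _) hb, sv_trans (sv_or_inr _ _) hb⟩

lemma snE_and (h : IsCumulative R) (ψ χ : Fm) :
    snE R φ ψ ∩ snE R φ χ = snE R φ (Fm.and ψ χ) := by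
  ext o
  cases o with
  | none =>
    exact ⟨fun hx => r_and_intro h hx.1 hx.2,
      fun hx => ⟨h.rw _ _ _ (sv_and_left _ _) hx, h.rw _ _ _ (sv_and_right _ _) hx⟩⟩
  | some α =>
    exact ⟨fun hx => sv_and_intro hx.1 hx.2,
      fun hx => ⟨sv_trans hx (sv_and_left _ _), sv_trans hx (sv_and_right _ _)⟩⟩

lemma snE_top (h : IsCumulative R) :
    (Set.univ : Set (snPol R φ).Obj) = snE R φ Fm.top := by
  apply Set.Subset.antisymm
  · rintro o -
    cases o with
    | none => exact rw_valid h (sv_top φ)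
    | some α => exact sv_top α
  · exact Set.subset_univ _

lemma snU_bot : (Set.univ : Set Fm) = snU Fm.bot := by
  apply Set.Subset.antisymm
  · rintro β -
    exact sv_bot β
  · exact Set.subset_univ _

lemma sn_interp_ext (h : IsCumulative R) :
    ∀ ψ, ((snModel φ h).interp ψ).ext = snE R φ ψ := by
  intro ψ
  induction ψ with
  | var n => rfl
  | bot =>
    show (snPol R φ).dn Set.univ = _
    exact (congrArg (snPol R φ).dn snU_bot).trans (dn_snU φ h _)
  | top =>
    show (Set.univ : Set (snPol R φ).Obj) = _
    exact snE_top φ h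
  | and ψ χ ihψ ihχ =>
    show ((snModel φ h).interp ψ).ext ∩ ((snModel φ h).interp χ).ext = _
    rw [ihψ, ihχ]; exact snE_and φ h ψ χ
  | or ψ χ ihψ ihχ =>
    have e1 : ((snModel φ h).interp ψ).int = snU ψ := by
      rw [← ((snModel φ h).interp ψ).up_ext]
      show (snPol R φ).up ((snModel φ h).interp ψ).ext = _
      rw [ihψ, up_snE φ h]
    have e2 : ((snModel φ h).interp χ).int = snU χ := by
      rw [← ((snModel φ h).interp χ).up_ext]
      show (snPol R φ).up ((snModel φ h).interp χ).ext = _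
      rw [ihχ, up_snE φ h]
    show (snPol R φ).dn (((snModel φ h).interp ψ).int ∩ ((snModel φ h).interp χ).int) = _
    rw [e1, e2]; exact (congrArg (snPol R φ).dn (snU_or ψ χ)).trans (dn_snU φ h _)

/-- The supernormal pointed model for φ. -/
def snPointed (h : IsCumulative R) : PointedModel := ⟨snModel φ h, none⟩

lemma snPointed_sat (h : IsCumulative R) (ψ : Fm) :
    (snPointed φ h).sat ψ ↔ R φ ψ := by
  show (snPointed φ h).pt ∈ ((snModel φ h).interp ψ).ext ↔ _
  rw [sn_interp_ext φ h]
  exact Iff.rfl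

lemma snPointed_normal (h : IsCumulative R) : NormalFor R (snPointed φ h) φ :=
  fun ψ hψ => (snPointed_sat φ h ψ).mpr hψ

end Supernormal

section CanonicalOrdered

variable {R : Fm → Fm → Prop}

/-- Base step relation on canonical states. -/
def prec0 (R : Fm → Fm → Prop) :
    (canonicalFrame R).S → (canonicalFrame R).S → Prop :=
  fun s t => ∃ α β, s.val = cls R α ∧ t.val = cls R β ∧ R β α ∧ ¬ R α β

/-- The canonical ordered frame: canonical labels, transitive closure of prec0. -/
def canF (R : Fm → Fm → Prop) : Frame :=
  (canonicalFrame R).withPrec (Relation.TransGen (prec0 R))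

lemma mem_hat_iff (h : IsCumulative R) {s : (canF R).S} {ψ : Fm} :
    s ∈ (canF R).hat ψ ↔ ∀ χ, s.val = cls R χ → R χ ψ := by
  constructor
  · intro hs χ hχ
    have hmem : (snPointed χ h) ∈ (canF R).l s := ⟨χ, hχ, snPointed_normal χ h⟩
    exact (snPointed_sat χ h ψ).mp (hs _ hmem)
  · rintro hall Ma ⟨φ', hval, hnorm⟩
    exact hnorm ψ (hall φ' hval)

/-- Strict R-chains. -/
def SChain (R : Fm → Fm → Prop) (d : ℕ → Fm) (k : ℕ) : Prop :=
  ∀ i < k, R (d (i + 1)) (d i) ∧ ¬ R (d i) (d (i + 1))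

lemma chain_of_transGen (h : IsCumulative R) {t s : (canonicalFrame R).S}
    (ht : Relation.TransGen (prec0 R) t s) :
    ∃ k, 0 < k ∧ ∃ d : ℕ → Fm, cls R (d 0) = t.val ∧ cls R (d k) = s.val ∧ SChain R d k := by
  induction ht with
  | single hp =>
    obtain ⟨α, β, hα, hβ, hR, hnR⟩ := hp
    refine ⟨1, one_pos, fun i => if i = 0 then α else β, by simp [hα.symm], by simp [hβ.symm], ?_⟩
    intro i hi
    interval_cases i
    simpa using ⟨hR, hnR⟩
  | tail _ hp ih =>
    obtain ⟨k, hk, d, h0, hmid, hch⟩ := ih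
    obtain ⟨α, β, hα, hβ, hR, hnR⟩ := hp
    -- d k ≈ α
    have hdkα : Eqv R (d k) α := (cls_eq_iff h).mp (hmid.trans hα)
    set f : ℕ → Fm := fun i => if i < k then d i else if i = k then α else β with hf
    have fval_lt : ∀ i, i < k → f i = d i := fun i hi => by simp [hf, hi]
    have fval_k : f k = α := by simp [hf]
    have fval_k1 : f (k + 1) = β := by
      simp only [hf]
      rw [if_neg (by omega), if_neg (by omega)]
    refine ⟨k + 1, by omega, f, ?_, ?_, ?_⟩
    · rw [fval_lt 0 hk]; exact h0
    · rw [fval_k1]; exact hβ.symm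
    · intro i hi
      rcases lt_trichotomy (i + 1) k with h1 | h1 | h1
      · have hik : i < k := by omega
        rw [fval_lt i hik, fval_lt (i+1) h1]
        exact hch i hik
      · -- i + 1 = k : junction edge
        have hik : i < k := by omega
        have hold := hch i hik
        rw [h1] at hold
        rw [fval_lt i hik, h1, fval_k]
        constructor
        · exact (left_eq h hdkα).mp hold.1
        · intro hc
          have hdiα : Eqv R (d i) α := ⟨hc, (left_eq h hdkα).mp hold.1⟩
          exact hold.2 ((left_eq h hdiα).mpr hdkα.2)
      · -- i = k
        have hik : i = k := by omega
        subst hik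
        rw [fval_k, fval_k1]
        exact ⟨hR, hnR⟩

lemma cycle_equiv (hl : LoopClosed R) {c : ℕ → Fm} {m : ℕ} (hm : 0 < m)
    (hper : ∀ i, c (i + m) = c i) (hedge : ∀ j, R (c (j + 1)) (c j)) :
    ∀ i, R (c i) (c (i + 1)) := by
  intro i
  have key := hl (m - 1) (fun kk => c (i + m - kk)) ?_ ?_
  · have key' : R (c (i + m - 0)) (c (i + m - (m - 1))) := key
    have e0 : i + m - 0 = i + m := by omega
    have e1 : i + m - (m - 1) = i + 1 := by omega
    rw [e0, e1, hper i] at key'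
    exact key'
  · intro kk hkk
    show R (c (i + m - kk)) (c (i + m - (kk + 1)))
    have harith : i + m - kk = (i + m - (kk + 1)) + 1 := by omega
    rw [harith]
    exact hedge _
  · show R (c (i + m - (m - 1))) (c (i + m - 0))
    have e0 : i + m - 0 = i + m := by omega
    have e1 : i + m - (m - 1) = i + 1 := by omega
    rw [e0, e1, hper i]
    exact hedge i

lemma no_cycle (h : IsCumulative R) (hl : LoopClosed R) {φ : Fm}
    {s t : (canF R).S} (hsφ : s.val = cls R φ) (ht : t ∈ (canF R).hat φ)
    (htg : Relation.TransGen (prec0 R) t s) : False := by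
  obtain ⟨k, hk, d, h0, hkval, hch⟩ := chain_of_transGen h htg
  have hR0 : R (d 0) φ := (mem_hat_iff h).mp ht (d 0) h0.symm
  have hdkφ : Eqv R (d k) φ := (cls_eq_iff h).mp (hkval.trans hsφ)
  set m := k + 2 with hm
  set e : ℕ → Fm := fun i => if i ≤ k then d i else φ with he
  set c : ℕ → Fm := fun j => e (j % m) with hc
  have hper : ∀ i, c (i + m) = c i := by
    intro i; simp only [hc, Nat.add_mod_right]
  have hedge : ∀ j, R (c (j + 1)) (c j) := by
    intro j
    have h1m : (1 : ℕ) % m = 1 := Nat.mod_eq_of_lt (by omega)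
    have hjm : (j + 1) % m = (j % m + 1) % m := by
      conv_lhs => rw [Nat.add_mod, h1m]
    have hr : j % m < m := Nat.mod_lt _ (by omega)
    rcases lt_trichotomy (j % m) k with hlt | heq | hgt
    · have : (j + 1) % m = j % m + 1 := by rw [hjm]; exact Nat.mod_eq_of_lt (by omega)
      simp only [hc, this, he]
      simp only [show j % m + 1 ≤ k by omega, if_pos, show j % m ≤ k by omega]
      exact (hch _ hlt).1
    · have : (j + 1) % m = j % m + 1 := by rw [hjm]; exact Nat.mod_eq_of_lt (by omega)
      simp only [hc, this, he, heq]
      simp only [show ¬ k + 1 ≤ k by omega, if_neg, le_refl, if_pos]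
      exact hdkφ.2
    · have hjk1 : j % m = k + 1 := by omega
      have : (j + 1) % m = 0 := by rw [hjm, hjk1]; simp [hm]
      simp only [hc, this, he, hjk1]
      simp only [show ¬ k + 1 ≤ k by omega, if_neg, Nat.zero_le, if_pos]
      exact hR0
  have := cycle_equiv hl (show 0 < m by omega) hper hedge 0
  simp only [hc, he, Nat.zero_mod, Nat.mod_eq_of_lt (show 1 < m by omega)] at this
  simp only [Nat.zero_le, if_pos, show 1 ≤ k by omega] at this
  exact (hch 0 hk).2 this

lemma canonicalState_mem_hat (h : IsCumulative R) (φ : Fm) :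
    (canonicalState R φ : (canF R).S) ∈ (canF R).hat φ := by
  refine (mem_hat_iff h).mpr ?_
  intro χ hχ
  exact ((cls_eq_iff h).mp (show cls R φ = cls R χ from hχ)).2

lemma canonicalState_minimal (h : IsCumulative R) (hl : LoopClosed R)
    {φ : Fm} {s : (canF R).S} (hsφ : s.val = cls R φ) (hs : s ∈ (canF R).hat φ) :
    MinimalIn (canF R).prec ((canF R).hat φ) s :=
  ⟨hs, fun t htm hp => no_cycle h hl hsφ htm hp⟩

end CanonicalOrdered

section Sound

variable {F : Frame}

lemma hat_mono {φ ψ : Fm} (hv : SeqValid φ ψ) : F.hat φ ⊆ F.hat ψ :=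
  fun _ hs Ma hMa => hv Ma.M (hs Ma hMa)

lemma hat_and (φ ψ : Fm) : F.hat (Fm.and φ ψ) = F.hat φ ∩ F.hat ψ := by
  ext s
  exact ⟨fun hs => ⟨fun Ma hMa => (hs Ma hMa).1, fun Ma hMa => (hs Ma hMa).2⟩,
    fun hs Ma hMa => ⟨hs.1 Ma hMa, hs.2 Ma hMa⟩⟩

end Sound

/-- representation theorem for loop-cumulative relations. -/
theorem representation_loop_cumulative (R : Fm → Fm → Prop) :
    (IsCumulative R ∧ LoopClosed R) ↔
    ∃ F : Frame, F.IsCumulativeModel ∧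
      Irreflexive F.prec ∧ Transitive F.prec ∧ R = F.conseq := by
  constructor
  · rintro ⟨h, hl⟩
    refine ⟨canF R, ?_, ?_, ?_, ?_⟩
    · -- cumulative model: smoothness
      intro ψ t ht
      obtain ⟨χ, hχ⟩ := t.2
      have hRχψ : R χ ψ := (mem_hat_iff h).mp ht χ hχ
      by_cases hb : R ψ χ
      · left
        exact canonicalState_minimal h hl (hχ.trans ((cls_eq_iff h).mpr ⟨hRχψ, hb⟩)) ht
      · right
        refine ⟨canonicalState R ψ,
          canonicalState_minimal h hl rfl (canonicalState_mem_hat h ψ), ?_⟩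
        exact Relation.TransGen.single ⟨ψ, χ, rfl, hχ, hRχψ, hb⟩
    · -- irreflexive
      intro s hs
      obtain ⟨χ, hχ⟩ := s.2
      refine no_cycle h hl hχ ?_ hs
      rw [mem_hat_iff h]
      intro χ' hχ'
      exact ((cls_eq_iff h).mp (hχ.symm.trans hχ')).2
    · -- transitive
      exact fun a b c hab hbc => Relation.TransGen.trans hab hbc
    · -- R = conseq
      funext φ ψ
      apply propext
      constructor
      · intro hR s hs
        obtain ⟨χ, hχ⟩ := s.2
        have hRχφ : R χ φ := (mem_hat_iff h).mp hs.1 χ hχ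
        by_cases hb : R φ χ
        · rw [mem_hat_iff h]
          intro χ' hχ'
          have e1 : Eqv R χ χ' := (cls_eq_iff h).mp (hχ.symm.trans hχ')
          exact (left_eq h e1).mp ((left_eq h ⟨hRχφ, hb⟩).mpr hR)
        · exact absurd (Relation.TransGen.single ⟨φ, χ, rfl, hχ, hRχφ, hb⟩)
            (hs.2 (canonicalState R φ) (canonicalState_mem_hat h φ))
      · intro hC
        have := hC (canonicalState R φ)
          (canonicalState_minimal h hl rfl (canonicalState_mem_hat h φ))
        exact (mem_hat_iff h).mp this φ rfl
  · rintro ⟨F, hsm, _hirr, htrans, rfl⟩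
    constructor
    · refine ⟨fun φ s hs => hs.1, ?_, ?_, ?_, ?_⟩
      · -- LLE
        intro φ ψ χ h1 h2 hφ s hs
        have he : F.hat φ = F.hat ψ := Set.Subset.antisymm (hat_mono h1) (hat_mono h2)
        rw [← he] at hs
        exact hφ s hs
      · -- RW
        intro φ ψ χ hv hc s hs
        exact hat_mono hv (hc s hs)
      · -- CM
        intro φ ψ χ hψ hχ s hs
        have hs1 := hs.1
        rw [hat_and] at hs1
        have hmin : MinimalIn F.prec (F.hat φ) s := by
          rcases hsm φ s hs1.1 with hm | ⟨v, hv, hvs⟩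
          · exact hm
          · refine absurd hvs (hs.2 v ?_)
            rw [hat_and]
            exact ⟨hv.1, hψ v hv⟩
        exact hχ s hmin
      · -- Cut
        intro φ ψ χ h1 h2 s hs
        have hsψ : s ∈ F.hat ψ := h2 s hs
        refine h1 s ⟨?_, fun u hu => ?_⟩
        · rw [hat_and]
          exact ⟨hs.1, hsψ⟩
        · rw [hat_and] at hu
          exact hs.2 u hu.1
    · -- Loop
      intro n φf h1 h2 s hs
      have key : ∀ i, i ≤ n →
          ∃ u, MinimalIn F.prec (F.hat (φf i)) u ∧ (u = s ∨ F.prec u s) := by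
        intro i
        induction i with
        | zero => exact fun _ => ⟨s, hs, Or.inl rfl⟩
        | succ i ih =>
          intro hin
          obtain ⟨u, hu, hus⟩ := ih (by omega)
          have hu1 : u ∈ F.hat (φf (i + 1)) := h1 i (by omega) u hu
          rcases hsm (φf (i + 1)) u hu1 with hm | ⟨v, hv, hvu⟩
          · exact ⟨u, hm, hus⟩
          · refine ⟨v, hv, Or.inr ?_⟩
            rcases hus with rfl | hp
            · exact hvu
            · exact htrans hvu hp
      obtain ⟨u, hu, hus⟩ := key n le_rfl
      rcases hus with rfl | hp
      · exact hu.1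
      · exact absurd hp (hs.2 u (h2 u hu))


end DR
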